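/- For the Margolus-diffusion Markov chain with parameter p ∈ (0,1), p ≠ 1/2, and symmetric initial condition, the marginal distribution at even times and odd positions is P_{2n}(2j+1) = (1−p) p^{2j+1} (1−2p)^{n−j−1} · J_{n−j−1}^{(2j+1,0)}(2p²/(1−2p) + 1) for 0 ≤ j ≤ n−1. -/

import Mathlib

/-- number of compositions of `z` into `k` nonnegative parts -/
def comp (z : ℤ) (k : ℕ) : ℕ :=
  if k = 0 then (if z = 0 then 1 else 0)
  else if 0 ≤ z then (z.toNat + (k - 1)).choose (k - 1) else 0

lemma comp_neg {z : ℤ} (hz : z < 0) (k : ℕ) : comp z k = 0 := by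
  unfold comp
  rcases k with _ | k <;> simp <;> omega

lemma comp_pascal (z : ℤ) (g : ℕ) :
    comp z (g + 1) = comp (z - 1) (g + 1) + comp z g := by
  rcases lt_trichotomy z 0 with h | h | h
  · rw [comp_neg h, comp_neg (by omega), comp_neg h]
  · subst h
    rcases g with _ | g <;> simp [comp]
  · have hz1 : (0:ℤ) ≤ z - 1 := by omega
    have hzt : z.toNat = (z - 1).toNat + 1 := by omega
    rcases g with _ | g
    · simp [comp, h.le, hz1]
      split_ifs <;> omega
    · simp only [comp, Nat.succ_ne_zero, if_false, if_pos h.le, if_pos hz1,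
        Nat.add_sub_cancel]
      rw [hzt]
      have : (z - 1).toNat + 1 + (g + 1) = ((z-1).toNat + (g+1)) + 1 := by omega
      rw [this, Nat.choose_succ_succ ((z-1).toNat + (g+1)) g,
        show (z-1).toNat + 1 + g = (z-1).toNat + (g+1) from by omega, Nat.add_comm]

/-- Path count: compositions `(m₀,…,m_f)` of `m` with alternating sum `s`. -/
def N : ℕ → ℕ → ℤ → ℕ
  | 0, m, s => if s = m then 1 else 0
  | f + 1, 0, s => N f 0 s
  | f + 1, m + 1, s => N (f + 1) m (s - (-1) ^ (f + 1)) + N f (m + 1) s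

/-- Closed form for `N`. -/
def Ncf (f m : ℕ) (s : ℤ) : ℕ :=
  if (2 : ℤ) ∣ ((m : ℤ) + s) then
    comp (((m : ℤ) + s) / 2) (f / 2 + 1) * comp (((m : ℤ) - s) / 2) ((f + 1) / 2)
  else 0

lemma Ncf_zero (m : ℕ) (s : ℤ) : Ncf 0 m s = if s = (m : ℤ) then 1 else 0 := by
  unfold Ncf comp
  rcases eq_or_ne s (m : ℤ) with h | h
  · subst h
    simp only [if_pos (show (2:ℤ) ∣ (m:ℤ) + m by omega)]
    have h1 : (0:ℤ) ≤ ((m:ℤ) + m)/2 := by omega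
    simp [h1]
  · rcases em ((2:ℤ) ∣ ((m : ℤ) + s)) with h2 | h2
    · simp only [if_pos h2, if_neg h]
      have : ¬ ((m:ℤ) - s) / 2 = 0 := by omega
      simp [this]
    · simp [h2, h]

lemma Ncf_m_zero (f : ℕ) (s : ℤ) : Ncf (f + 1) 0 s = Ncf f 0 s := by
  unfold Ncf
  rcases em ((2:ℤ) ∣ ((0:ℕ) : ℤ) + s) with h2 | h2
  · simp only [if_pos h2]
    rcases lt_trichotomy s 0 with h | h | h
    · have ha : ((0:ℕ):ℤ) - s > 0 := by omega
      have hb : (((0:ℕ):ℤ) + s) / 2 < 0 := by omega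
      rw [comp_neg hb, comp_neg hb, Nat.zero_mul, Nat.zero_mul]
    · subst h
      norm_num [comp]
    · have hb : (((0:ℕ):ℤ) - s) / 2 < 0 := by omega
      rw [comp_neg hb, comp_neg hb, Nat.mul_zero, Nat.mul_zero]
  · simp only [Nat.cast_zero, zero_add] at h2 ⊢
    simp [h2]

lemma Ncf_succ (f m : ℕ) (s : ℤ) :
    Ncf (f + 1) (m + 1) s = Ncf (f + 1) m (s - (-1) ^ (f + 1)) + Ncf f (m + 1) s := by
  have hdvd : ∀ s' : ℤ, ((2:ℤ) ∣ ((m:ℤ) + 1 + s')) ↔ ((2:ℤ) ∣ ((m:ℤ) + s' + 1)) := by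
    intro s'; constructor <;> (intro h; omega)
  rcases Nat.even_or_odd f with ⟨g, hg⟩ | ⟨g, hg⟩
  · -- f = 2g even, f+1 = 2g+1 odd, (-1)^(f+1) = -1
    subst hg
    have hpow : ((-1:ℤ)) ^ (g + g + 1) = -1 := by
      rw [show g + g + 1 = 2*g+1 from by ring, pow_succ, pow_mul]; norm_num
    rw [hpow]
    unfold Ncf
    have e1 : (g + g + 1) / 2 + 1 = g + 1 := by omega
    have e2 : (g + g + 1 + 1) / 2 = g + 1 := by omega
    have e3 : (g + g) / 2 + 1 = g + 1 := by omega
    have e4 : (g + g + 1) / 2 = g := by omega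
    rw [e1, e2, e3, e4]
    push_cast
    rcases em ((2:ℤ) ∣ ((m:ℤ) + 1 + s)) with h2 | h2
    · have h2' : (2:ℤ) ∣ ((m:ℤ) + (s - -1)) := by omega
      rw [if_pos h2, if_pos h2', if_pos h2]
      have ea : ((m:ℤ) + (s - -1)) / 2 = ((m:ℤ) + 1 + s) / 2 := by omega
      have eb : ((m:ℤ) - (s - -1)) / 2 = ((m:ℤ) + 1 - s) / 2 - 1 := by omega
      rw [ea, eb]
      rw [comp_pascal (((m:ℤ) + 1 - s) / 2) g]
      ring
    · rw [if_neg h2, if_neg (by omega : ¬ (2:ℤ) ∣ ((m:ℤ) + (s - -1))), if_neg h2]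
  · -- f = 2g+1 odd, f+1 = 2g+2 even, (-1)^(f+1) = 1
    subst hg
    have hpow : ((-1:ℤ)) ^ (2*g + 1 + 1) = 1 := by
      rw [show 2*g+1+1 = 2*(g+1) from by ring, pow_mul]; norm_num
    rw [hpow]
    unfold Ncf
    have e1 : (2*g + 1 + 1) / 2 + 1 = g + 2 := by omega
    have e2 : (2*g + 1 + 1 + 1) / 2 = g + 1 := by omega
    have e3 : (2*g + 1) / 2 + 1 = g + 1 := by omega
    have e4 : (2*g + 1 + 1) / 2 = g + 1 := by omega
    rw [e1, e2, e3, e4]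
    push_cast
    rcases em ((2:ℤ) ∣ ((m:ℤ) + 1 + s)) with h2 | h2
    · have h2' : (2:ℤ) ∣ ((m:ℤ) + (s - 1)) := by omega
      rw [if_pos h2', if_pos h2, if_pos h2]
      have ea : ((m:ℤ) + (s - 1)) / 2 = ((m:ℤ) + 1 + s) / 2 - 1 := by omega
      have eb : ((m:ℤ) - (s - 1)) / 2 = ((m:ℤ) + 1 - s) / 2 := by omega
      rw [ea, eb]
      rw [comp_pascal (((m:ℤ) + 1 + s) / 2) (g+1)]
      ring
    · rw [if_neg h2, if_neg (by omega : ¬ (2:ℤ) ∣ ((m:ℤ) + (s - 1))), if_neg h2]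

lemma N_eq_Ncf : ∀ (f m : ℕ) (s : ℤ), N f m s = Ncf f m s := by
  intro f
  induction f with
  | zero => intro m s; rw [N, Ncf_zero]
  | succ f ih =>
    intro m
    induction m with
    | zero => intro s; rw [N, Ncf_m_zero, ih]
    | succ m ihm => intro s; rw [N, Ncf_succ, ihm, ih]

lemma chain_formula (p : ℝ) (P : ℕ → ℤ → ℤ → ℝ)
    (hinit : ∀ x : ℤ,
      P 0 x 1 = (if x = 0 then (1 : ℝ) / 2 else 0) ∧
      P 0 x (-1) = (if x = 0 then (1 : ℝ) / 2 else 0))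
    (hrec : ∀ (t : ℕ) (x d : ℤ), d = 1 ∨ d = -1 →
      P (t + 1) x d = p * P t (x - d) d + (1 - p) * P t x (-d)) :
    ∀ (t : ℕ) (x d : ℤ), d = 1 ∨ d = -1 →
      P t x d = (1 / 2) * ∑ f ∈ Finset.range (t + 1),
        p ^ (t - f) * (1 - p) ^ f * (N f (t - f) (x * d * (-1) ^ f) : ℝ) := by
  intro t
  induction t with
  | zero =>
    intro x d hd
    have hx : x * d * (-1:ℤ) ^ 0 = x * d := by ring
    rw [Finset.sum_range_one, hx, N]
    have hxd : x * d = 0 ↔ x = 0 := by rcases hd with h | h <;> subst h <;> omega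
    rcases hd with h | h <;> subst h <;>
      [rw [(hinit x).1]; rw [(hinit x).2]] <;>
      rcases em (x = 0) with hx0 | hx0 <;>
      simp [hx0, hxd] <;> ring
  | succ t ih =>
    intro x d hd
    have hmd : -d = 1 ∨ -d = -1 := by rcases hd with h | h <;> subst h <;> simp
    rw [hrec t x d hd, ih (x - d) d hd, ih x (-d) hmd]
    have hdd : d * d = 1 := by rcases hd with h | h <;> subst h <;> ring
    -- RHS manipulation
    have key : ∑ f ∈ Finset.range (t + 2),
        p ^ (t + 1 - f) * (1 - p) ^ f * (N f (t + 1 - f) (x * d * (-1) ^ f) : ℝ)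
        = ∑ f ∈ Finset.range (t + 1),
            p ^ (t + 1 - f) * (1 - p) ^ f * (N f (t - f) (x * d * (-1) ^ f - (-1) ^ f) : ℝ)
          + ∑ f ∈ Finset.range (t + 1),
            p ^ (t - f) * (1 - p) ^ (f + 1) * (N f (t - f) (x * d * (-1) ^ (f + 1)) : ℝ) := by
      rw [Finset.sum_range_succ]
      have hlast : (N (t + 1) (t + 1 - (t + 1)) (x * d * (-1) ^ (t + 1)) : ℝ)
          = (N t 0 (x * d * (-1) ^ (t + 1)) : ℝ) := by
        norm_num [N]
      rw [Nat.sub_self] at hlast ⊢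
      rw [hlast]
      have hsplit : ∀ f ∈ Finset.range (t + 1),
          p ^ (t + 1 - f) * (1 - p) ^ f * (N f (t + 1 - f) (x * d * (-1) ^ f) : ℝ)
          = p ^ (t + 1 - f) * (1 - p) ^ f * (N f (t - f) (x * d * (-1) ^ f - (-1) ^ f) : ℝ)
            + (if f = 0 then 0 else
                p ^ (t + 1 - f) * (1 - p) ^ f * (N (f - 1) (t + 1 - f) (x * d * (-1) ^ f) : ℝ)) := by
        intro f hf
        rw [Finset.mem_range] at hf
        have h1 : t + 1 - f = (t - f) + 1 := by omega
        rcases f with _ | f'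
        · simp only [if_pos rfl, add_zero]
          rw [h1]
          congr 1
          rw [N, N]
          have e : (x * d * (-1:ℤ)^0 = ((t - 0 + 1 : ℕ) : ℤ))
              ↔ (x * d * (-1:ℤ)^0 - (-1:ℤ)^0 = ((t - 0 : ℕ) : ℤ)) := by
            push_cast; constructor <;> intro h <;> omega
          simp only [e]
          simp
        · rw [if_neg (by omega), Nat.add_sub_cancel, h1, N]
          push_cast
          ring
      have h2 : ∑ f ∈ Finset.range (t+1),
            (if f = 0 then (0:ℝ) else
              p^(t+1-f)*(1-p)^f * (N (f-1) (t+1-f) (x*d*(-1)^f) : ℝ))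
          + p^0 * (1-p)^(t+1) * (N t 0 (x*d*(-1)^(t+1)) : ℝ)
          = ∑ f ∈ Finset.range (t+1),
              p^(t-f)*(1-p)^(f+1) * (N f (t-f) (x*d*(-1)^(f+1)) : ℝ) := by
        rw [Finset.sum_range_succ' _ t, Finset.sum_range_succ]
        have hc : ∀ i ∈ Finset.range t,
            (if i+1 = 0 then (0:ℝ) else
              p^(t+1-(i+1))*(1-p)^(i+1) * (N ((i+1)-1) (t+1-(i+1)) (x*d*(-1)^(i+1)) : ℝ))
            = p^(t-i)*(1-p)^(i+1) * (N i (t-i) (x*d*(-1)^(i+1)) : ℝ) := by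
          intro i hi
          rw [if_neg (Nat.succ_ne_zero i), Nat.add_sub_cancel,
            show t+1-(i+1) = t-i from by omega]
        rw [Finset.sum_congr rfl hc, if_pos rfl, add_zero, Nat.sub_self]
      rw [Finset.sum_congr rfl hsplit, Finset.sum_add_distrib, add_assoc, h2]
    rw [key]
    have harg : ∀ f : ℕ, (x-d)*d*(-1:ℤ)^f = x*d*(-1)^f - (-1)^f := by
      intro f; linear_combination (-(-1:ℤ)^f) * hdd
    have ha : ∑ f ∈ Finset.range (t + 1),
          p ^ (t + 1 - f) * (1 - p) ^ f * (N f (t - f) (x * d * (-1) ^ f - (-1) ^ f) : ℝ)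
        = p * ∑ f ∈ Finset.range (t + 1),
          p ^ (t - f) * (1 - p) ^ f * (N f (t - f) ((x - d) * d * (-1) ^ f) : ℝ) := by
      rw [Finset.mul_sum]
      refine Finset.sum_congr rfl fun f hf => ?_
      rw [Finset.mem_range] at hf
      rw [harg f, show t+1-f = (t-f)+1 from by omega, pow_succ]
      ring
    have hb : ∑ f ∈ Finset.range (t + 1),
          p ^ (t - f) * (1 - p) ^ (f + 1) * (N f (t - f) (x * d * (-1) ^ (f + 1)) : ℝ)
        = (1 - p) * ∑ f ∈ Finset.range (t + 1),
          p ^ (t - f) * (1 - p) ^ f * (N f (t - f) (x * -d * (-1) ^ f) : ℝ) := by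
      rw [Finset.mul_sum]
      refine Finset.sum_congr rfl fun f hf => ?_
      rw [show x * -d * (-1:ℤ)^f = x*d*(-1)^(f+1) from by ring, pow_succ]
      ring
    rw [ha, hb]
    ring

lemma sum_odd (F : ℕ → ℝ) (n : ℕ) (hev : ∀ k, F (2 * k) = 0) :
    ∑ f ∈ Finset.range (2 * n + 1), F f = ∑ g ∈ Finset.range n, F (2 * g + 1) := by
  induction n with
  | zero => simpa using hev 0
  | succ n ih =>
    rw [show 2 * (n + 1) + 1 = (2 * n + 1) + 1 + 1 from by ring,
      Finset.sum_range_succ, Finset.sum_range_succ, ih,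
      show 2 * n + 1 + 1 = 2 * (n + 1) from by ring, hev (n + 1),
      add_zero, Finset.sum_range_succ]

/-- Generalized binomial coefficient `C(a, m)` for real `a`. -/
noncomputable def genBinom (a : ℝ) (m : ℕ) : ℝ :=
  (∏ i ∈ Finset.range m, (a - i)) / (m.factorial : ℝ)

/-- Jacobi polynomial `P_n^{(α,β)}(x)` via its finite-sum representation. -/
noncomputable def jacobiP (n : ℕ) (α β x : ℝ) : ℝ :=
  ∑ k ∈ Finset.range (n + 1),
    genBinom ((n : ℝ) + α) (n - k) * genBinom ((n : ℝ) + β) k *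
      ((x - 1) / 2) ^ k * ((x + 1) / 2) ^ (n - k)

lemma genBinom_nat (c m : ℕ) : genBinom (c : ℝ) m = (c.choose m : ℝ) := by
  have hprod : ∏ i ∈ Finset.range m, ((c : ℝ) - i) = (c.descFactorial m : ℝ) := by
    induction m with
    | zero => simp
    | succ m ih =>
      rw [Finset.prod_range_succ, ih, Nat.descFactorial_succ]
      rcases le_or_gt m c with h | h
      · push_cast [h]
        ring
      · rw [Nat.descFactorial_eq_zero_iff_lt.mpr h, Nat.sub_eq_zero_of_le h.le]
        push_cast
        ring
  rw [genBinom, hprod, Nat.descFactorial_eq_factorial_mul_choose]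
  push_cast
  rw [mul_comm, mul_div_assoc, div_self (by positivity : ((m.factorial : ℝ)) ≠ 0), mul_one]

lemma comp_toNat (z : ℤ) (g c : ℕ) (h : 0 ≤ z) (hc : z.toNat + g = c) :
    comp z (g + 1) = c.choose g := by
  simp [comp, h, hc]

lemma N_even_zero (f m : ℕ) (s : ℤ) (h : ¬ (2:ℤ) ∣ ((m : ℤ) + s)) : N f m s = 0 := by
  rw [N_eq_Ncf, Ncf, if_neg h]

lemma N_odd_eval (n j g : ℕ) (hg : g < n) (hj : j < n) (s : ℤ)
    (hs : s = 2*(j:ℤ)+1 ∨ s = -(2*(j:ℤ)+1)) :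
    N (2*g+1) (2*n - (2*g+1)) s = (n+j).choose g * (n-j-1).choose g := by
  rw [N_eq_Ncf, Ncf]
  have hm : ((2*n - (2*g+1) : ℕ) : ℤ) = 2*(n:ℤ) - 2*g - 1 := by
    push_cast [Nat.cast_sub (by omega : 2*g+1 ≤ 2*n)]; ring
  rw [if_pos (by rw [hm]; rcases hs with h | h <;> omega : (2:ℤ) ∣ (((2*n - (2*g+1) : ℕ):ℤ) + s))]
  rw [show (2*g+1)/2 + 1 = g+1 from by omega, show (2*g+1+1)/2 = g+1 from by omega]
  rcases hs with h | h
  · subst h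
    have ha : (((2*n - (2*g+1) : ℕ):ℤ) + (2*(j:ℤ)+1)) / 2 = (n:ℤ) + j - g := by
      rw [hm]; omega
    have hb : (((2*n - (2*g+1) : ℕ):ℤ) - (2*(j:ℤ)+1)) / 2 = (n:ℤ) - g - j - 1 := by
      rw [hm]; omega
    rw [ha, hb, comp_toNat ((n:ℤ) + j - g) g (n+j) (by omega) (by omega)]
    rcases le_or_gt (g + j + 1) n with hle | hlt
    · rw [comp_toNat ((n:ℤ) - g - j - 1) g (n-j-1) (by omega) (by omega)]
    · have hz : ((n:ℤ) - g - j - 1) < 0 := by omega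
      have hc : n - j - 1 < g := by omega
      rw [comp_neg hz, Nat.choose_eq_zero_of_lt hc]
  · subst h
    have ha : (((2*n - (2*g+1) : ℕ):ℤ) + -(2*(j:ℤ)+1)) / 2 = (n:ℤ) - g - j - 1 := by
      rw [hm]; omega
    have hb : (((2*n - (2*g+1) : ℕ):ℤ) - -(2*(j:ℤ)+1)) / 2 = (n:ℤ) + j - g := by
      rw [hm]; omega
    rw [ha, hb, comp_toNat ((n:ℤ) + j - g) g (n+j) (by omega) (by omega)]
    rcases le_or_gt (g + j + 1) n with hle | hlt
    · rw [comp_toNat ((n:ℤ) - g - j - 1) g (n-j-1) (by omega) (by omega), Nat.mul_comm]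
    · have hz : ((n:ℤ) - g - j - 1) < 0 := by omega
      have hc : n - j - 1 < g := by omega
      rw [comp_neg hz, Nat.choose_eq_zero_of_lt hc]
      simp

theorem margolus_chain_even_time_odd_position
    (p : ℝ) (hp0 : 0 < p) (hp1 : p < 1) (hphalf : p ≠ 1 / 2)
    (P : ℕ → ℤ → ℤ → ℝ)
    (hinit : ∀ x : ℤ,
      P 0 x 1 = (if x = 0 then (1 : ℝ) / 2 else 0) ∧
      P 0 x (-1) = (if x = 0 then (1 : ℝ) / 2 else 0))
    (hrec : ∀ (t : ℕ) (x d : ℤ), d = 1 ∨ d = -1 →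
      P (t + 1) x d = p * P t (x - d) d + (1 - p) * P t x (-d)) :
    ∀ n j : ℕ, j < n →
      P (2 * n) (2 * (j : ℤ) + 1) 1 + P (2 * n) (2 * (j : ℤ) + 1) (-1)
        = (1 - p) * p ^ (2 * j + 1) * (1 - 2 * p) ^ (n - j - 1) *
            jacobiP (n - j - 1) (2 * j + 1 : ℝ) 0 (2 * p ^ 2 / (1 - 2 * p) + 1) := by
  intro n j hjn
  have h2p : (1:ℝ) - 2 * p ≠ 0 := fun h => hphalf (by linarith)
  set x : ℤ := 2 * (j : ℤ) + 1 with hxdef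
  set S : ℝ := ∑ g ∈ Finset.range n, ((n+j).choose g : ℝ) * ((n-j-1).choose g : ℝ)
      * (p ^ (2*n-1-2*g) * (1-p) ^ (2*g+1)) with hSdef
  have hL : P (2*n) x 1 + P (2*n) x (-1) = S := by
    rw [chain_formula p P hinit hrec (2*n) x 1 (Or.inl rfl),
        chain_formula p P hinit hrec (2*n) x (-1) (Or.inr rfl),
        ← mul_add, ← Finset.sum_add_distrib]
    have hev : ∀ k : ℕ,
        (p ^ (2*n - 2*k) * (1-p) ^ (2*k) * (N (2*k) (2*n - 2*k) (x * 1 * (-1) ^ (2*k)) : ℝ)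
         + p ^ (2*n - 2*k) * (1-p) ^ (2*k) * (N (2*k) (2*n - 2*k) (x * (-1) * (-1) ^ (2*k)) : ℝ)) = 0 := by
      intro k
      obtain ⟨r, hr⟩ : ∃ r, (2*n - 2*k : ℕ) = 2*r := ⟨n - k, by omega⟩
      have hnd1 : ¬ (2:ℤ) ∣ (((2*n - 2*k : ℕ) : ℤ) + x * 1 * (-1) ^ (2*k)) := by
        have h1 : x * 1 * (-1:ℤ) ^ (2*k) = x := by
          rw [pow_mul]; norm_num
        rw [h1, hr, hxdef]; push_cast; omega
      have hnd2 : ¬ (2:ℤ) ∣ (((2*n - 2*k : ℕ) : ℤ) + x * (-1) * (-1) ^ (2*k)) := by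
        have h1 : x * (-1) * (-1:ℤ) ^ (2*k) = -x := by
          rw [pow_mul]; norm_num
        rw [h1, hr, hxdef]; push_cast; omega
      rw [N_even_zero _ _ _ hnd1, N_even_zero _ _ _ hnd2]
      norm_num
    rw [sum_odd _ n hev, hSdef, Finset.mul_sum]
    refine Finset.sum_congr rfl fun g hg => ?_
    rw [Finset.mem_range] at hg
    have hpw : (-1:ℤ) ^ (2*g+1) = -1 := by
      rw [pow_succ, pow_mul]; norm_num
    have e1 : x * 1 * (-1:ℤ) ^ (2*g+1) = -(2*(j:ℤ)+1) := by rw [hpw, hxdef]; ring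
    have e2 : x * (-1) * (-1:ℤ) ^ (2*g+1) = 2*(j:ℤ)+1 := by rw [hpw, hxdef]; ring
    rw [e1, e2, N_odd_eval n j g hg hjn _ (Or.inr rfl), N_odd_eval n j g hg hjn _ (Or.inl rfl),
      show 2*n - (2*g+1) = 2*n-1-2*g from by omega]
    push_cast
    ring
  rw [hL]
  -- Right-hand side
  rw [jacobiP]
  set M := n - j - 1 with hMdef
  have hMn : M + (j + 1) = n := by omega
  have hsum : (1-2*p) ^ M * ∑ k ∈ Finset.range (M+1),
        genBinom ((M:ℝ) + (2*(j:ℝ)+1)) (M-k) * genBinom ((M:ℝ) + 0) k *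
          ((2*p^2/(1-2*p)+1 - 1)/2) ^ k * ((2*p^2/(1-2*p)+1 + 1)/2) ^ (M-k)
      = ∑ k ∈ Finset.range (M+1),
          ((n+j).choose (M-k) : ℝ) * ((M.choose k : ℕ) : ℝ)
            * (p ^ (2*k) * (1-p) ^ (2*(M-k))) := by
    rw [Finset.mul_sum]
    refine Finset.sum_congr rfl fun k hk => ?_
    rw [Finset.mem_range] at hk
    have hg1 : ((M:ℝ) + (2*(j:ℝ)+1)) = ((n+j : ℕ) : ℝ) := by
      rw [← hMn]; push_cast; ring
    have hg2 : ((M:ℝ) + 0) = ((M:ℕ) : ℝ) := by ring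
    rw [hg1, hg2, genBinom_nat, genBinom_nat]
    have ed1 : (2*p^2/(1-2*p)+1 - 1)/2 = p^2/(1-2*p) := by ring
    have ed2 : (2*p^2/(1-2*p)+1 + 1)/2 = (1-p)^2/(1-2*p) := by
      field_simp; ring
    rw [ed1, ed2]
    have hpow : (1-2*p) ^ M * ((p^2/(1-2*p)) ^ k * ((1-p)^2/(1-2*p)) ^ (M-k))
        = p ^ (2*k) * (1-p) ^ (2*(M-k)) := by
      obtain ⟨a, ha⟩ : ∃ a, M = a + k := ⟨M - k, by omega⟩
      rw [ha, Nat.add_sub_cancel, pow_add]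
      have c1 : ((1:ℝ)-2*p) * (p^2/(1-2*p)) = p^2 := by field_simp
      have c2 : ((1:ℝ)-2*p) * ((1-p)^2/(1-2*p)) = (1-p)^2 := by field_simp
      calc (1-2*p)^a * (1-2*p)^k * ((p^2/(1-2*p)) ^ k * ((1-p)^2/(1-2*p)) ^ a)
          = ((1-2*p) * (p^2/(1-2*p)))^k * ((1-2*p) * ((1-p)^2/(1-2*p)))^a := by
            rw [mul_pow, mul_pow]; ring
        _ = (p^2)^k * ((1-p)^2)^a := by rw [c1, c2]
        _ = p^(2*k) * (1-p)^(2*a) := by rw [← pow_mul, ← pow_mul]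
    linear_combination ((n+j).choose (M-k) : ℝ) * ((M.choose k : ℕ) : ℝ) * hpow
  rw [mul_assoc ((1-p) * p ^ (2*j+1)) ((1-2*p) ^ M), hsum]
  have hrefl := Finset.sum_range_reflect
    (fun k => ((n+j).choose (M-k) : ℝ) * ((M.choose k : ℕ) : ℝ)
      * (p ^ (2*k) * (1-p) ^ (2*(M-k)))) (M+1)
  rw [← hrefl]
  have hS2 : ∑ g ∈ Finset.range (M+1),
        ((n+j).choose g : ℝ) * ((M.choose g : ℕ) : ℝ) * (p ^ (2*n-1-2*g) * (1-p) ^ (2*g+1))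
      = S := by
    rw [hSdef]
    refine Finset.sum_subset (Finset.range_subset_range.mpr (by omega)) fun g hg hg' => ?_
    rw [Finset.mem_range] at hg hg'
    rw [Nat.choose_eq_zero_of_lt (show M < g from by omega)]
    push_cast
    ring
  rw [← hS2, Finset.mul_sum]
  refine Finset.sum_congr rfl fun g hg => ?_
  rw [Finset.mem_range] at hg
  simp only [show M + 1 - 1 - g = M - g from by omega]
  rw [show M - (M - g) = g from by omega,
    Nat.choose_symm (show g ≤ M from by omega),
    show 2*n-1-2*g = (2*j+1) + 2*(M-g) from by omega, pow_add,
    show 2*g+1 = 2*g + 1 from rfl, pow_succ]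
  ring
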